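/- Let B be an H-module algebra with action ▷, and A an ideal of B with a system of local units S = {e_λ}. Suppose for every h ∈ H and a ∈ A there exist subsystems of local units L(h,a) and R(h,a) of S such that e(h▷a) = (h▷a)f for all e ∈ L(h,a), f ∈ R(h,a). Then h ⇀ a := e(h▷a), for any e ∈ L(h,a), is well-defined and determines a partial action of H on A. -/
import Mathlib


open TensorProduct

section PartialHopfPrelude

variable (k : Type) [Field k] (H : Type) [Ring H] [HopfAlgebra k H]

/-- Sweedler-style sum `Σ f h₁ h₂` over the comultiplication of `h`. -/
noncomputable def sweedler {M : Type} [AddCommGroup M] [Module k M]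
    (f : H →ₗ[k] H →ₗ[k] M) (h : H) : M :=
  TensorProduct.lift f (Coalgebra.comul h)

variable {A : Type} [AddCommGroup A] [Module k A]

/-- `Σ (h₁ · a) * (h₂ g · b)`, with an explicit multiplication `mA` on `A`. -/
noncomputable def paRhs (mA : A →ₗ[k] A →ₗ[k] A) (act : H →ₗ[k] A →ₗ[k] A)
    (h g : H) (a b : A) : A :=
  sweedler k H ((mA.comp (act.flip a)).compl₂ ((act.flip b).comp (LinearMap.mulRight k g))) h

/-- `Σ (h₁ g · b) * (h₂ · a)`, with an explicit multiplication `mA` on `A`. -/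
noncomputable def paSymmRhs (mA : A →ₗ[k] A →ₗ[k] A) (act : H →ₗ[k] A →ₗ[k] A)
    (h g : H) (a b : A) : A :=
  sweedler k H ((mA.comp ((act.flip b).comp (LinearMap.mulRight k g))).compl₂ (act.flip a)) h

/-- A (left) partial action of the Hopf algebra `H` on `A`, where the (possibly nonunital,
possibly nonassociative) multiplication of `A` is given explicitly as a bilinear map `mA`:
`1_H · a = a` and `h · (a (g · b)) = Σ (h₁ · a)(h₂ g · b)`. -/
structure IsPartialActionOn (mA : A →ₗ[k] A →ₗ[k] A) (act : H →ₗ[k] A →ₗ[k] A) : Prop where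
  one_act : ∀ a : A, act 1 a = a
  act_assoc : ∀ (h g : H) (a b : A), act h (mA a (act g b)) = paRhs k H mA act h g a b

/-- A symmetrical partial action: additionally `h · ((g · b) a) = Σ (h₁ g · b)(h₂ · a)`. -/
structure IsSymmPartialActionOn (mA : A →ₗ[k] A →ₗ[k] A) (act : H →ₗ[k] A →ₗ[k] A)
    extends IsPartialActionOn k H mA act : Prop where
  act_symm : ∀ (h g : H) (a b : A), act h (mA (act g b) a) = paSymmRhs k H mA act h g a b

variable {B : Type} [NonUnitalRing B] [Module k B] [SMulCommClass k B B] [IsScalarTower k B B]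

/-- A partial action of `H` on the nonunital algebra `B` (with its own multiplication). -/
def IsPartialAction (act : H →ₗ[k] B →ₗ[k] B) : Prop :=
  IsPartialActionOn k H (LinearMap.mul k B) act

/-- A symmetrical partial action of `H` on the nonunital algebra `B`. -/
def IsSymmPartialAction (act : H →ₗ[k] B →ₗ[k] B) : Prop :=
  IsSymmPartialActionOn k H (LinearMap.mul k B) act

end PartialHopfPrelude

section ModuleAlgebraPrelude

variable (k : Type) [Field k] (H : Type) [Ring H] [HopfAlgebra k H]
variable {B : Type} [NonUnitalRing B] [Module k B] [SMulCommClass k B B] [IsScalarTower k B B]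

/-- `B` is an `H`-module algebra (possibly nonunital) for the global action `gact`:
`1 ▷ b = b`, `h ▷ (b c) = Σ (h₁ ▷ b)(h₂ ▷ c)` and `h ▷ (g ▷ b) = (h g) ▷ b`. -/
structure IsModuleAlgebra (gact : H →ₗ[k] B →ₗ[k] B) : Prop where
  one_act : ∀ b : B, gact 1 b = b
  act_mul : ∀ (h : H) (b c : B),
    gact h (b * c) =
      sweedler k H (((LinearMap.mul k B).comp (gact.flip b)).compl₂ (gact.flip c)) h
  act_act : ∀ (h g : H) (b : B), gact h (gact g b) = gact (h * g) b

end ModuleAlgebraPrelude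


section MyAux

variable {k : Type} [Field k] {H : Type} [Ring H] [HopfAlgebra k H]

theorem my_sweedler_compr₂ {M N : Type} [AddCommGroup M] [Module k M]
    [AddCommGroup N] [Module k N]
    (F : H →ₗ[k] H →ₗ[k] M) (g : M →ₗ[k] N) (h : H) :
    sweedler k H (F.compr₂ g) h = g (sweedler k H F h) := by
  unfold sweedler
  rw [TensorProduct.lift_compr₂]
  rfl

end MyAux

section Stmt14


variable {k : Type} [Field k] {H : Type} [Ring H] [HopfAlgebra k H]
variable {B : Type} [NonUnitalRing B] [Module k B] [SMulCommClass k B B] [IsScalarTower k B B]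

/-- `S` is a system of local units for the subset `Acar` of `B`: it consists of idempotents
of `Acar`, and every finite subset of `Acar` admits an element of `S` acting as a two-sided
identity on it. -/
def IsSLUFor (Acar : Set B) (S : Set B) : Prop :=
  S ⊆ Acar ∧ (∀ e ∈ S, e * e = e) ∧
    ∀ F : Finset B, ↑F ⊆ Acar → ∃ e ∈ S, ∀ a ∈ F, e * a = a ∧ a * e = a

/-- Let `B` be an `H`-module algebra with action `▷`, and `A` an ideal of
`B` with a system of local units `S`.  If for every `h ∈ H` and `a ∈ A` there are subsystems
of local units `L(h,a)` and `R(h,a)` of `S` with `e (h ▷ a) = (h ▷ a) f` for all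
`e ∈ L(h,a)`, `f ∈ R(h,a)`, then `h ⇀ a := e (h ▷ a)` (for any `e ∈ L(h,a)`) is
well-defined and is a partial action of `H` on `A`. -/
theorem local_units_induce_partial_action
    (gact : H →ₗ[k] B →ₗ[k] B) (hma : IsModuleAlgebra k H gact)
    (A : NonUnitalSubalgebra k B)
    (hIdl : ∀ (b : B) (x : B), x ∈ A → b * x ∈ A ∧ x * b ∈ A)
    (S : Set B) (hS : IsSLUFor (A : Set B) S)
    (hLR : ∀ (h : H), ∀ a ∈ A, ∃ L R : Set B,
      L ⊆ S ∧ R ⊆ S ∧ IsSLUFor (A : Set B) L ∧ IsSLUFor (A : Set B) R ∧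
      ∀ e ∈ L, ∀ f ∈ R, e * gact h a = gact h a * f) :
    ∃ pact : H →ₗ[k] ↥A →ₗ[k] ↥A,
      (∀ (h : H) (a : ↥A) (L R : Set B),
        L ⊆ S → R ⊆ S → IsSLUFor (A : Set B) L → IsSLUFor (A : Set B) R →
        (∀ e ∈ L, ∀ f ∈ R, e * gact h (a : B) = gact h (a : B) * f) →
        ∀ e ∈ L, (pact h a : B) = e * gact h (a : B)) ∧
      IsPartialAction k H pact := by
  classical
  -- pick a local unit for a single element
  have slu_unit : ∀ {L : Set B}, IsSLUFor (A : Set B) L → ∀ y : B, y ∈ A →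
      ∃ e ∈ L, e * y = y ∧ y * e = y := by
    intro L hL y hy
    obtain ⟨e, heL, hu⟩ := hL.2.2 {y} (by simpa using hy)
    exact ⟨e, heL, hu y (Finset.mem_singleton_self y)⟩
  -- two elements of A that are equal after left multiplication by any element of A are equal
  have eqA : ∀ y₁ y₂ : B, y₁ ∈ A → y₂ ∈ A → (∀ a' ∈ A, a' * y₁ = a' * y₂) → y₁ = y₂ := by
    intro y₁ y₂ h₁ h₂ hmul
    obtain ⟨u, huS, hu⟩ := hS.2.2 {y₁, y₂} (by
      intro x hx
      simp only [Finset.coe_insert, Finset.coe_singleton, Set.mem_insert_iff,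
        Set.mem_singleton_iff] at hx
      rcases hx with h | h <;> subst h <;> assumption)
    have hu1 := (hu y₁ (by simp)).1
    have hu2 := (hu y₂ (by simp)).1
    calc y₁ = u * y₁ := hu1.symm
      _ = u * y₂ := hmul u (hS.1 huS)
      _ = y₂ := hu2
  -- key cancellation lemma
  have K1 : ∀ (x : B) (L R : Set B), IsSLUFor (A : Set B) L → IsSLUFor (A : Set B) R →
      (∀ e ∈ L, ∀ f ∈ R, e * x = x * f) → ∀ e ∈ L, ∀ a' ∈ A, a' * (e * x) = a' * x := by
    intro x L R hLs hRs heqx e heL a' ha'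
    have hax : a' * x ∈ A := (hIdl x a' ha').2
    obtain ⟨ff, hfR, _, hf2⟩ := slu_unit hRs (a' * x) hax
    rw [heqx e heL ff hfR, ← mul_assoc, hf2]
  have memA : ∀ (x e : B), e ∈ A → e * x ∈ A := fun x e he => (hIdl x e he).2
  -- choose the defining data
  have hEx : ∀ (h : H) (a : ↥A), ∃ (e : B) (L R : Set B), e ∈ L ∧ L ⊆ S ∧ R ⊆ S ∧
      IsSLUFor (A : Set B) L ∧ IsSLUFor (A : Set B) R ∧
      ∀ e' ∈ L, ∀ f ∈ R, e' * gact h ↑a = gact h ↑a * f := by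
    intro h a
    obtain ⟨L, R, h1, h2, h3, h4, h5⟩ := hLR h ↑a a.2
    obtain ⟨e, heL, _⟩ := h3.2.2 ∅ (by simp)
    exact ⟨e, L, R, heL, h1, h2, h3, h4, h5⟩
  choose E Lc Rc hmem hLS hRS hLslu hRslu heq using hEx
  have Kp : ∀ (h : H) (a : ↥A), ∀ a' ∈ A, a' * (E h a * gact h ↑a) = a' * gact h ↑a :=
    fun h a => K1 _ _ _ (hLslu h a) (hRslu h a) (heq h a) _ (hmem h a)
  have memE : ∀ (h : H) (a : ↥A), E h a * gact h ↑a ∈ A :=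
    fun h a => memA _ _ ((hLslu h a).1 (hmem h a))
  set f : H → ↥A → ↥A := fun h a => ⟨E h a * gact h ↑a, memE h a⟩ with hfdef
  have fval : ∀ (h : H) (a : ↥A), (f h a : B) = E h a * gact h ↑a := fun h a => rfl
  have fKp : ∀ (h : H) (a : ↥A), ∀ a' ∈ A, a' * (f h a : B) = a' * gact h ↑a := by
    intro h a a' ha'; rw [fval]; exact Kp h a a' ha'
  -- linearity of f
  have addH : ∀ (h₁ h₂ : H) (a : ↥A), f (h₁ + h₂) a = f h₁ a + f h₂ a := by
    intro h₁ h₂ a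
    apply Subtype.ext
    apply eqA _ _ (f (h₁ + h₂) a).2 (f h₁ a + f h₂ a).2
    intro a' ha'
    have : ((f h₁ a + f h₂ a : ↥A) : B) = (f h₁ a : B) + (f h₂ a : B) := rfl
    rw [this, mul_add, fKp _ _ _ ha', fKp _ _ _ ha', fKp _ _ _ ha', map_add,
      LinearMap.add_apply, mul_add]
  have smulH : ∀ (c : k) (h : H) (a : ↥A), f (c • h) a = c • f h a := by
    intro c h a
    apply Subtype.ext
    apply eqA _ _ (f (c • h) a).2 (c • f h a).2
    intro a' ha'
    have : ((c • f h a : ↥A) : B) = c • (f h a : B) := rfl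
    rw [this, mul_smul_comm, fKp _ _ _ ha', fKp _ _ _ ha', map_smul,
      LinearMap.smul_apply, mul_smul_comm]
  have addA : ∀ (h : H) (a₁ a₂ : ↥A), f h (a₁ + a₂) = f h a₁ + f h a₂ := by
    intro h a₁ a₂
    apply Subtype.ext
    apply eqA _ _ (f h (a₁ + a₂)).2 (f h a₁ + f h a₂).2
    intro a' ha'
    have hc : ((f h a₁ + f h a₂ : ↥A) : B) = (f h a₁ : B) + (f h a₂ : B) := rfl
    have hc2 : ((a₁ + a₂ : ↥A) : B) = (a₁ : B) + (a₂ : B) := rfl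
    rw [hc, mul_add, fKp _ _ _ ha', fKp _ _ _ ha', fKp _ _ _ ha', hc2, map_add, mul_add]
  have smulA : ∀ (c : k) (h : H) (a : ↥A), f h (c • a) = c • f h a := by
    intro c h a
    apply Subtype.ext
    apply eqA _ _ (f h (c • a)).2 (c • f h a).2
    intro a' ha'
    have hc : ((c • f h a : ↥A) : B) = c • (f h a : B) := rfl
    have hc2 : ((c • a : ↥A) : B) = c • (a : B) := rfl
    rw [hc, mul_smul_comm, fKp _ _ _ ha', fKp _ _ _ ha', hc2, map_smul, mul_smul_comm]
  refine ⟨LinearMap.mk₂ k f addH smulH addA smulA, ?_, ?_⟩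
  · intro h a L R hLS' hRS' hLslu' hRslu' heq' e heL
    simp only [LinearMap.mk₂_apply]
    apply eqA _ _ (f h a).2 (memA _ e (hLslu'.1 heL))
    intro a' ha'
    rw [fKp _ _ _ ha', K1 _ _ _ hLslu' hRslu' heq' e heL a' ha']
  · -- it is a partial action
    refine { one_act := ?_, act_assoc := ?_ }
    · intro a
      apply Subtype.ext
      simp only [LinearMap.mk₂_apply]
      apply eqA _ _ (f 1 a).2 a.2
      intro a' ha'
      rw [fKp _ _ _ ha', hma.one_act]
    · intro h g a b
      simp only [LinearMap.mk₂_apply]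
      set cA : ↥A →ₗ[k] B :=
        { toFun := Subtype.val, map_add' := fun _ _ => rfl, map_smul' := fun _ _ => rfl }
        with hcA
      set w : ↥A := (LinearMap.mul k ↥A) a ((LinearMap.mk₂ k f addH smulH addA smulA) g b)
        with hwdef
      have hw : (w : B) = (a : B) * gact g ↑b := by
        have h1 : (w : B) = (a : B) * (f g b : B) := by
          rw [hwdef]; simp only [LinearMap.mul_apply', LinearMap.mk₂_apply]; rfl
        rw [h1, fKp g b _ a.2]
      apply Subtype.ext
      apply eqA _ _ (f h w).2 (paRhs k H (LinearMap.mul k ↥A)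
        (LinearMap.mk₂ k f addH smulH addA smulA) h g a b).2
      intro a' ha'
      -- left-hand side
      have hlhs : a' * (f h w : B) =
          sweedler k H ((((LinearMap.mul k B).comp (gact.flip ↑a)).compl₂
            (gact.flip (gact g ↑b))).compr₂ (LinearMap.mulLeft k a')) h := by
        rw [fKp _ _ _ ha', hw, hma.act_mul, my_sweedler_compr₂]
        rfl
      -- right-hand side
      set G : H →ₗ[k] H →ₗ[k] ↥A :=
        (((LinearMap.mul k ↥A).comp
            ((LinearMap.mk₂ k f addH smulH addA smulA).flip a)).compl₂
          (((LinearMap.mk₂ k f addH smulH addA smulA).flip b).comp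
            (LinearMap.mulRight k g))) with hG
      have hrhs : a' * ((paRhs k H (LinearMap.mul k ↥A)
          (LinearMap.mk₂ k f addH smulH addA smulA) h g a b : ↥A) : B) =
          sweedler k H ((G.compr₂ cA).compr₂ (LinearMap.mulLeft k a')) h := by
        rw [my_sweedler_compr₂, my_sweedler_compr₂]
        rfl
      rw [hlhs, hrhs]
      congr 1
      apply LinearMap.ext; intro p
      apply LinearMap.ext; intro q
      simp only [hG, LinearMap.compr₂_apply, LinearMap.compl₂_apply, LinearMap.comp_apply,
        LinearMap.flip_apply, LinearMap.mulLeft_apply, LinearMap.mul_apply',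
        LinearMap.mk₂_apply, LinearMap.mulRight_apply, hcA, LinearMap.coe_mk,
        AddHom.coe_mk]
      have hcoe : ((f p a * f (q * g) b : ↥A) : B) = (f p a : B) * (f (q * g) b : B) := rfl
      rw [hma.act_act q g ↑b, hcoe, ← mul_assoc a' ((gact p) ↑a), ← mul_assoc a' ((f p a : B)),
        fKp p a _ ha', fKp (q * g) b _ ((hIdl (gact p ↑a) a' ha').2)]

end Stmt14
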